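/- For every universal coBüchi automaton A over a finite alphabet Σ and every k ∈ ℕ: L^∀_k(A) = L(D(A,k)), i.e. an ω-word w is such that every run of A on w visits 1-colored states at most k times if and only if the unique run of the determinization D(A,k) on w never visits an unsafe counting function. -/
import Mathlib


open scoped Classical

/-- A preMealy machine over input alphabet `I`, output alphabet `O`, with state type `M`. -/
structure PreMealy (I O M : Type) where
  init : M
  trans : M → I → Option (O × M)

namespace PreMealy

variable {I O M : Type}

/-- One step of a preMealy machine on a pair (input, output): defined iff the transition
on the input is defined and produces exactly the given output. -/
noncomputable def step (P : PreMealy I O M) (m : M) (p : I × O) : Option M :=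
  match P.trans m p.1 with
  | some (o, m') => if o = p.2 then some m' else none
  | none => none

/-- Running a preMealy machine on a finite word of (input, output) pairs. -/
noncomputable def runFrom (P : PreMealy I O M) : M → List (I × O) → Option M
  | m, [] => some m
  | m, p :: u =>
    match P.step m p with
    | some m' => runFrom P m' u
    | none => none

/-- The language `L(P)` of finite words in `(I·O)*` accepted by `P`. -/
def lang (P : PreMealy I O M) : Set (List (I × O)) :=
  { u | (P.runFrom P.init u).isSome }

/-- The ω-language `L_ω(P)`: ω-words all of whose finite prefixes belong to `L(P)`. -/
def omegaLang (P : PreMealy I O M) : Set (ℕ → I × O) :=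
  { w | ∀ n : ℕ, ((List.range n).map w) ∈ P.lang }

/-- `P` is a (complete) Mealy machine when its transition function is total. -/
def Total (P : PreMealy I O M) : Prop :=
  ∀ m i, (P.trans m i).isSome

/-- A hole of `P` is a pair (state, input) on which the transition is undefined. -/
def Hole (P : PreMealy I O M) (m : M) (i : I) : Prop :=
  P.trans m i = none

/-- `Left_p`: the set of finite words reaching state `p` from the initial state. -/
def leftLang (P : PreMealy I O M) (p : M) : Set (List (I × O)) :=
  { u | P.runFrom P.init u = some p }

end PreMealy

/-- `P₁ ⪯ P₂`: `P₁` is a subgraph of `P₂`. -/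
def Subgraph {I O M₁ M₂ : Type} (P₁ : PreMealy I O M₁) (P₂ : PreMealy I O M₂) : Prop :=
  ∃ Φ : M₁ → M₂, Function.Injective Φ ∧ Φ P₁.init = P₂.init ∧
    ∀ p i o q, P₁.trans p i = some (o, q) ↔ P₂.trans (Φ p) i = some (o, Φ q)

/-- `S` is `P`-realizable: some (finite-state, complete) Mealy machine extends `P`
and its ω-language is included in `S ⊆ (I·O)^ω`. -/
def PRealizable {I O M : Type} (P : PreMealy I O M) (S : Set (ℕ → I × O)) : Prop :=
  ∃ (N : Type) (_ : Fintype N) (Mach : PreMealy I O N),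
    Mach.Total ∧ Subgraph P Mach ∧ Mach.omegaLang ⊆ S

/-- Quotient (left derivative) of a set of ω-words by a finite word. -/
def wordQuot {α : Type} (u : List α) (S : Set (ℕ → α)) : Set (ℕ → α) :=
  { v | (fun n => if h : n < u.length then u.get ⟨n, h⟩ else v (n - u.length)) ∈ S }

/-- Interleaving of an ω-word over `I × O` into an ω-word over `Σ = I ⊕ O`. -/
def interleave {I O : Type} (w : ℕ → I × O) : ℕ → I ⊕ O :=
  fun n => if n % 2 = 0 then Sum.inl (w (n / 2)).1 else Sum.inr (w (n / 2)).2

/-- Flattening of a finite word over `I × O` into a word over `Σ = I ⊕ O`. -/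
def flattenWord {I O : Type} (u : List (I × O)) : List (I ⊕ O) :=
  u.flatMap fun p => [Sum.inl p.1, Sum.inr p.2]

/-- `P`-realizability of a specification over `Σ = I ⊕ O`. -/
def PRealizableSigma {I O M : Type} (P : PreMealy I O M) (S : Set (ℕ → I ⊕ O)) : Prop :=
  ∃ (N : Type) (_ : Fintype N) (Mach : PreMealy I O N),
    Mach.Total ∧ Subgraph P Mach ∧ ∀ w ∈ Mach.omegaLang, interleave w ∈ S

/-- Realizability of a specification over `Σ = I ⊕ O` by some Mealy machine. -/
def RealizableSigma (I O : Type) (S : Set (ℕ → I ⊕ O)) : Prop :=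
  ∃ (N : Type) (_ : Fintype N) (Mach : PreMealy I O N),
    Mach.Total ∧ ∀ w ∈ Mach.omegaLang, interleave w ∈ S

/-- A universal coBüchi automaton; `col1 q` means state `q` has color 1. -/
structure UCB (σ Q : Type) where
  init : Set Q
  δ : Q → σ → Set Q
  δ_ne : ∀ q a, (δ q a).Nonempty
  col1 : Q → Prop

namespace UCB

variable {σ Q : Type}

/-- `ρ` is a run of `A` on the ω-word `w`. -/
def Run (A : UCB σ Q) (w : ℕ → σ) (ρ : ℕ → Q) : Prop :=
  ρ 0 ∈ A.init ∧ ∀ n, ρ (n + 1) ∈ A.δ (ρ n) (w n)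

/-- `L^∀_k(A)`: every run visits 1-colored states at most `k` times. -/
def langK (A : UCB σ Q) (k : ℕ) : Set (ℕ → σ) :=
  { w | ∀ ρ : ℕ → Q, A.Run w ρ →
      ∀ s : Finset ℕ, (∀ j ∈ s, A.col1 (ρ j)) → s.card ≤ k }

/-- `L^∀(A)`: every run visits 1-colored states only finitely often. -/
def langForall (A : UCB σ Q) : Set (ℕ → σ) :=
  { w | ∀ ρ : ℕ → Q, A.Run w ρ → { j | A.col1 (ρ j) }.Finite }

/-- A run prefix of `A` on a finite word `p` (only `ρ 0, …, ρ p.length` are relevant). -/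
def RunPrefix (A : UCB σ Q) (p : List σ) (ρ : ℕ → Q) : Prop :=
  ρ 0 ∈ A.init ∧ ∀ (j : ℕ) (h : j < p.length), ρ (j + 1) ∈ A.δ (ρ j) (p.get ⟨j, h⟩)

/-- The set of states reachable from a set of states while reading a finite word. -/
def postSet (A : UCB σ Q) : Set Q → List σ → Set Q
  | S, [] => S
  | S, a :: u => postSet A (⋃ q ∈ S, A.δ q a) u

end UCB

/-- The set `CF(A,k)` of `k`-counting functions, as integer-valued functions. -/
def CFset (Q : Type) (k : ℕ) : Set (Q → ℤ) :=
  { f | ∀ q, -1 ≤ f q ∧ f q ≤ (k : ℤ) + 1 }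

/-- The transition function `δ^D` of the determinization `D(A,k)` on counting functions. -/
noncomputable def detTransFun {σ Q : Type} [Fintype Q] (A : UCB σ Q) (k : ℕ)
    (f : Q → ℤ) (a : σ) : Q → ℤ := fun q =>
  let pred : Finset Q := Finset.univ.filter fun q' => q ∈ A.δ q' a ∧ 0 ≤ f q'
  if h : pred.Nonempty then
    min (pred.sup' h f + (if A.col1 q then 1 else 0)) ((k : ℤ) + 1)
  else -1

/-- The (unique) run of `D(A,k)` on an ω-word `w`, starting from `f`. -/
noncomputable def detRun {σ Q : Type} [Fintype Q] (A : UCB σ Q) (k : ℕ)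
    (f : Q → ℤ) (w : ℕ → σ) : ℕ → Q → ℤ
  | 0 => f
  | n + 1 => detTransFun A k (detRun A k f w n) (w n)

/-- The state of `D(A,k)` reached from `f` after reading a finite word. -/
noncomputable def detPostW {σ Q : Type} [Fintype Q] (A : UCB σ Q) (k : ℕ) :
    (Q → ℤ) → List σ → Q → ℤ
  | f, [] => f
  | f, a :: u => detPostW A k (detTransFun A k f a) u

/-- The initial counting function `f₀` of `D(A,k)`. -/
noncomputable def initCF {σ Q : Type} (A : UCB σ Q) : Q → ℤ := fun q =>
  if q ∈ A.init then (if A.col1 q then 1 else 0) else -1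

/-- `L(D(A,k)[f])`: ω-words whose run of `D(A,k)` from `f` never visits an unsafe
counting function (one taking the value `k+1`). -/
def langD {σ Q : Type} [Fintype Q] (A : UCB σ Q) (k : ℕ) (f : Q → ℤ) :
    Set (ℕ → σ) :=
  { w | ∀ n, ¬ ∃ q, detRun A k f w n q = (k : ℤ) + 1 }

/-- A complete deterministic safety automaton: the set `bad` of unsafe states is a trap. -/
structure DetSafety (σ Q : Type) where
  start : Q
  δ : Q → σ → Q
  bad : Set Q
  trap : ∀ q ∈ bad, ∀ a, δ q a ∈ bad

namespace DetSafety

variable {σ Q : Type}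

/-- State reached after reading a finite word. -/
def postW (A : DetSafety σ Q) : Q → List σ → Q
  | q, [] => q
  | q, a :: u => postW A (A.δ q a) u

/-- The run of a deterministic automaton on an ω-word. -/
def runOn (A : DetSafety σ Q) (w : ℕ → σ) : ℕ → Q
  | 0 => A.start
  | n + 1 => A.δ (runOn A w n) (w n)

/-- The (safety) ω-language: the run never enters an unsafe state. -/
def omegaLang (A : DetSafety σ Q) : Set (ℕ → σ) :=
  { w | ∀ n, runOn A w n ∉ A.bad }

end DetSafety

/-- A complete deterministic automaton (no acceptance condition). -/
structure DetAuto (σ Q : Type) where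
  start : Q
  δ : Q → σ → Q

/-- State reached after reading a finite word. -/
def DetAuto.postW {σ Q : Type} (A : DetAuto σ Q) : Q → List σ → Q
  | q, [] => q
  | q, a :: u => DetAuto.postW A (A.δ q a) u

/-- Domination order between collections: every element of `A` is below some element of `B`. -/
def acLE {α : Type} (r : α → α → Prop) (A B : Set α) : Prop :=
  ∀ x ∈ A, ∃ y ∈ B, r x y

/-- Downward closure of a collection of subsets of `Y`. -/
def dcl {Y : Type} (A : Set (Set Y)) : Set (Set Y) :=
  { X | ∃ X' ∈ A, X ⊆ X' }

/-- The merged relation `U(∼, p)` for a non-congruent point with successors `s, s'`. -/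
def Umerge {M : Type} (r : M → M → Prop) (s s' : M) : M → M → Prop :=
  fun y y' => r y y' ∨ (r y s ∧ r y' s') ∨ (r y' s ∧ r y s')

/-- Prefix closure of a set of finite words over `I × O`. -/
def prefsE {I O : Type} (E : Set (List (I × O))) : Set (List (I × O)) :=
  { u | ∃ e ∈ E, u <+: e }

/-- Consistency of a set of examples: the output is uniquely determined by each
prefix ending with an input. -/
def ConsistentE {I O : Type} (E : Set (List (I × O))) : Prop :=
  ∀ (u : List (I × O)) (i : I) (o o' : O),
    (u ++ [(i, o)]) ∈ prefsE E → (u ++ [(i, o')]) ∈ prefsE E → o = o'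

/-- The prefix-tree acceptor `PTA(E)`: states are the prefixes of `E` (together with ε). -/
noncomputable def PTA {I O : Type} (E : Set (List (I × O))) :
    PreMealy I O (↥(insert ([] : List (I × O)) (prefsE E))) where
  init := ⟨[], Set.mem_insert _ _⟩
  trans := fun u i =>
    if h : ∃ o : O, (u.1 ++ [(i, o)]) ∈ prefsE E then
      some (h.choose, ⟨u.1 ++ [(i, h.choose)], Set.mem_insert_of_mem _ h.choose_spec⟩)
    else none

/-- The fixpoint labelling `F*` of the states of a preMealy machine by counting functions. -/
noncomputable def Fstar {I O M Q : Type} [Fintype Q] (P : PreMealy I O M)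
    (A : UCB (I ⊕ O) Q) (k : ℕ) (m : M) : Q → ℤ := fun q =>
  sSup (insert (-1 : ℤ)
    { z | ∃ u ∈ P.leftLang m, detPostW A k (initCF A) (flattenWord u) q = z })

/-- Number of 1-colored states among `ρ 0, …, ρ n`, as an integer. -/
noncomputable def cnt {σ Q : Type} (A : UCB σ Q) (ρ : ℕ → Q) (n : ℕ) : ℤ :=
  ∑ j ∈ Finset.range (n + 1), (if A.col1 (ρ j) then (1 : ℤ) else 0)

lemma cnt_nonneg {σ Q : Type} (A : UCB σ Q) (ρ : ℕ → Q) (n : ℕ) : 0 ≤ cnt A ρ n := by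
  unfold cnt
  apply Finset.sum_nonneg
  intro j _
  split <;> omega

lemma cnt_zero {σ Q : Type} (A : UCB σ Q) (ρ : ℕ → Q) :
    cnt A ρ 0 = if A.col1 (ρ 0) then 1 else 0 := by
  unfold cnt
  rw [Finset.sum_range_one]

lemma cnt_succ {σ Q : Type} (A : UCB σ Q) (ρ : ℕ → Q) (n : ℕ) :
    cnt A ρ (n + 1) = cnt A ρ n + (if A.col1 (ρ (n + 1)) then 1 else 0) := by
  unfold cnt
  rw [Finset.sum_range_succ]

lemma cnt_congr {σ Q : Type} (A : UCB σ Q) (ρ ρ' : ℕ → Q) (n : ℕ)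
    (h : ∀ j ≤ n, ρ j = ρ' j) : cnt A ρ n = cnt A ρ' n := by
  unfold cnt
  apply Finset.sum_congr rfl
  intro j hj
  rw [h j (by simpa [Nat.lt_succ_iff] using Finset.mem_range.mp hj)]

lemma cnt_eq_card {σ Q : Type} (A : UCB σ Q) (ρ : ℕ → Q) (n : ℕ) :
    cnt A ρ n = (((Finset.range (n + 1)).filter fun j => A.col1 (ρ j)).card : ℤ) := by
  unfold cnt
  rw [Finset.sum_boole]

lemma initCF_eq {σ Q : Type} (A : UCB σ Q) (q : Q) (hq : q ∈ A.init) :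
    initCF A q = if A.col1 q then 1 else 0 := by
  simp [initCF, hq]

/-- Lower bound: any run prefix's (truncated) count bounds the counting function. -/
lemma lemA {σ Q : Type} [Fintype Q] (A : UCB σ Q) (k : ℕ) (w : ℕ → σ)
    (ρ : ℕ → Q) (h0 : ρ 0 ∈ A.init) :
    ∀ n, (∀ j < n, ρ (j + 1) ∈ A.δ (ρ j) (w j)) →
      min (cnt A ρ n) ((k : ℤ) + 1) ≤ detRun A k (initCF A) w n (ρ n) := by
  intro n
  induction n with
  | zero =>
    intro _
    simp only [detRun]
    rw [initCF_eq A _ h0, cnt_zero]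
    exact min_le_left _ _
  | succ n ih =>
    intro hrun
    have ih' := ih (fun j hj => hrun j (Nat.lt_succ_of_lt hj))
    have hstep : ρ (n + 1) ∈ A.δ (ρ n) (w n) := hrun n (Nat.lt_succ_self n)
    have h0' : (0 : ℤ) ≤ detRun A k (initCF A) w n (ρ n) := by
      have := cnt_nonneg A ρ n
      have : (0 : ℤ) ≤ min (cnt A ρ n) ((k : ℤ) + 1) := by positivity
      linarith
    simp only [detRun, detTransFun]
    have hmem : ρ n ∈ Finset.univ.filter
        fun q' => ρ (n + 1) ∈ A.δ q' (w n) ∧ 0 ≤ detRun A k (initCF A) w n q' := by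
      simp [hstep, h0']
    have hne : (Finset.univ.filter
        fun q' => ρ (n + 1) ∈ A.δ q' (w n) ∧ 0 ≤ detRun A k (initCF A) w n q').Nonempty :=
      ⟨ρ n, hmem⟩
    rw [dif_pos hne]
    have hsup : detRun A k (initCF A) w n (ρ n) ≤
        (Finset.univ.filter fun q' => ρ (n + 1) ∈ A.δ q' (w n) ∧
          0 ≤ detRun A k (initCF A) w n q').sup' hne (detRun A k (initCF A) w n) :=
      Finset.le_sup' _ hmem
    rw [cnt_succ]
    split <;> omega
  
/-- Witness extraction: a positive counting value is realized by a run prefix. -/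
lemma lemB {σ Q : Type} [Fintype Q] (A : UCB σ Q) (k : ℕ) (w : ℕ → σ) :
    ∀ n (q : Q), 0 ≤ detRun A k (initCF A) w n q →
      ∃ ρ : ℕ → Q, ρ 0 ∈ A.init ∧ (∀ j < n, ρ (j + 1) ∈ A.δ (ρ j) (w j)) ∧ ρ n = q ∧
        detRun A k (initCF A) w n q ≤ cnt A ρ n := by
  intro n
  induction n with
  | zero =>
    intro q hq
    simp only [detRun] at hq ⊢
    have hinit : q ∈ A.init := by
      by_contra h
      simp [initCF, h] at hq
    refine ⟨fun _ => q, hinit, by omega, rfl, ?_⟩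
    rw [initCF_eq A q hinit, cnt_zero]
  | succ n ih =>
    intro q hq
    simp only [detRun, detTransFun] at hq ⊢
    by_cases hne : (Finset.univ.filter
        fun q' => q ∈ A.δ q' (w n) ∧ 0 ≤ detRun A k (initCF A) w n q').Nonempty
    swap
    · rw [dif_neg hne] at hq; omega
    rw [dif_pos hne] at hq ⊢
    obtain ⟨q', hq'mem, hq'sup⟩ :=
      Finset.exists_mem_eq_sup' hne (detRun A k (initCF A) w n)
    have hq'prop := Finset.mem_filter.mp hq'mem
    obtain ⟨ρ, hρ0, hρrun, hρn, hρcnt⟩ := ih q' hq'prop.2.2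
    set ρ' : ℕ → Q := fun j => if j ≤ n then ρ j else q with hρ'def
    have hρ'n1 : ρ' (n + 1) = q := by simp [hρ'def]
    have hρ'eq : ∀ j ≤ n, ρ j = ρ' j := by intro j hj; simp [hρ'def, hj]
    refine ⟨ρ', by simpa [hρ'def] using hρ0, ?_, hρ'n1, ?_⟩
    · intro j hj
      rcases Nat.lt_or_ge j n with h | h
      · have e1 : ρ' j = ρ j := (hρ'eq j (le_of_lt h)).symm
        have e2 : ρ' (j + 1) = ρ (j + 1) := (hρ'eq (j + 1) h).symm
        rw [e1, e2]; exact hρrun j h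
      · have hjn : j = n := by omega
        rw [hjn]
        have e1 : ρ' n = ρ n := (hρ'eq n le_rfl).symm
        rw [hρ'n1, e1, hρn]
        exact hq'prop.2.1
    · rw [cnt_succ, hρ'n1, ← cnt_congr A ρ ρ' n hρ'eq, hq'sup]
      have h1 : min (detRun A k (initCF A) w n q' + (if A.col1 q then 1 else 0))
          ((k : ℤ) + 1) ≤ detRun A k (initCF A) w n q' + (if A.col1 q then 1 else 0) :=
        min_le_left _ _
      split at h1 <;> split <;> omega

/-- Counting values never exceed `k+1`. -/
lemma lemC {σ Q : Type} [Fintype Q] (A : UCB σ Q) (k : ℕ) (w : ℕ → σ) :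
    ∀ n (q : Q), detRun A k (initCF A) w n q ≤ (k : ℤ) + 1 := by
  intro n
  induction n with
  | zero =>
    intro q
    simp only [detRun, initCF]
    split
    · split <;> omega
    · omega
  | succ n ih =>
    intro q
    simp only [detRun, detTransFun]
    split
    · exact min_le_right _ _
    · omega

/-- correctness of the determinization, `L^∀_k(A) = L(D(A,k))`. -/
theorem stmt2 {σ Q : Type} [Fintype σ] [Fintype Q] [Nonempty Q]
    (A : UCB σ Q) (k : ℕ) :
    A.langK k = langD A k (initCF A) := by
  ext w
  constructor
  · -- langK ⊆ langD
    intro hw n hex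
    obtain ⟨q, hq⟩ := hex
    have hq0 : 0 ≤ detRun A k (initCF A) w n q := by rw [hq]; positivity
    obtain ⟨ρ, hρ0, hρrun, hρn, hρcnt⟩ := lemB A k w n q hq0
    -- extend ρ to an infinite run
    set tail : ℕ → Q := fun m =>
      Nat.rec (ρ n) (fun m qm => (A.δ_ne qm (w (n + m))).some) m with htail
    have tail0 : tail 0 = ρ n := rfl
    have tailstep : ∀ m, tail (m + 1) ∈ A.δ (tail m) (w (n + m)) := by
      intro m
      exact (A.δ_ne (tail m) (w (n + m))).some_mem
    set τ : ℕ → Q := fun j => if j ≤ n then ρ j else tail (j - n) with hτ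
    have hτeq : ∀ j ≤ n, τ j = ρ j := by intro j hj; simp [hτ, hj]
    have hτrun : A.Run w τ := by
      constructor
      · rw [hτeq 0 (Nat.zero_le n)]; exact hρ0
      · intro j
        rcases Nat.lt_or_ge j n with h | h
        · rw [hτeq j (le_of_lt h), hτeq (j + 1) h]
          exact hρrun j h
        · have hτj : τ j = tail (j - n) := by
            rcases Nat.eq_or_lt_of_le h with h' | h'
            · rw [hτeq j (le_of_eq h'.symm)]
              have : j - n = 0 := by omega
              rw [this, tail0, h']
            · simp only [hτ]
              rw [if_neg (by omega : ¬ j ≤ n)]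
          have hτj1 : τ (j + 1) = tail (j - n + 1) := by
            have h1 : ¬ (j + 1 ≤ n) := by omega
            have h2 : j + 1 - n = j - n + 1 := by omega
            simp only [hτ]
            rw [if_neg h1, h2]
          rw [hτj, hτj1]
          have := tailstep (j - n)
          rwa [show n + (j - n) = j by omega] at this
    set s : Finset ℕ := (Finset.range (n + 1)).filter fun j => A.col1 (τ j) with hs
    have hcol : ∀ j ∈ s, A.col1 (τ j) := by
      intro j hj; exact (Finset.mem_filter.mp hj).2
    have hcard := hw τ hτrun s hcol
    have hcnteq : cnt A ρ n = (s.card : ℤ) := by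
      rw [cnt_congr A ρ τ n (fun j hj => (hτeq j hj).symm), cnt_eq_card]
    rw [hq] at hρcnt
    rw [hcnteq] at hρcnt
    have : (s.card : ℤ) ≤ (k : ℤ) := by exact_mod_cast hcard
    omega
  · -- langD ⊆ langK
    intro hw ρ hρ s hs
    rcases s.eq_empty_or_nonempty with h | h
    · simp [h]
    have hne := h
    set n := s.max' hne with hn
    have hsub : ∀ j ∈ s, j ∈ (Finset.range (n + 1)).filter fun j => A.col1 (ρ j) := by
      intro j hj
      refine Finset.mem_filter.mpr ⟨Finset.mem_range.mpr ?_, hs j hj⟩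
      have := Finset.le_max' s j hj
      omega
    have hcard : s.card ≤ ((Finset.range (n + 1)).filter fun j => A.col1 (ρ j)).card :=
      Finset.card_le_card fun j hj => hsub j hj
    have hA := lemA A k w ρ hρ.1 n (fun j _ => hρ.2 j)
    have hC := lemC A k w n (ρ n)
    have hD := hw n
    push_neg at hD
    have hDq := hD (ρ n)
    have hlt : detRun A k (initCF A) w n (ρ n) ≤ (k : ℤ) := by omega
    have hcnt : cnt A ρ n ≤ (k : ℤ) := by omega
    have : ((((Finset.range (n + 1)).filter fun j => A.col1 (ρ j)).card : ℤ)) ≤ (k : ℤ) := by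
      rw [← cnt_eq_card]; exact hcnt
    have : (s.card : ℤ) ≤ (k : ℤ) := le_trans (by exact_mod_cast hcard) this
    exact_mod_cast this
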